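/- Suppose the set S = {y | H_g(y) > 0} satisfies S ⊆ {y | g(y) > 0} ∩ {y | l(y) > 0}; suppose π_H is a control policy rendering S robustly invariant, i.e., for all y ∈ S and all d ∈ D, f(y, π_H(y), d) ∈ S; and suppose π_V is a control policy such that for every x with V(x) > 0 and every disturbance policy π_d, the closed-loop trajectory (x_t) from x under (π_V, π_d) admits some τ ∈ ℕ with H_g(x_τ) > 0 and l(x_t) > 0 for all t ≤ τ. Then for every x with V(x) > 0, the switching policy π_RAS defined by π_RAS(y) = π_V(y) if H_g(y) ≤ 0 and π_RAS(y) = π_H(y) otherwise, witnesses x ∈ RAS: for every disturbance policy π_d, the closed-loop trajectory from x under (π_RAS, π_d) satisfies l(x_t) > 0 for all t ∈ ℕ and there exists τ ∈ ℕ with g(x_t) > 0 for all t ≥ τ. -/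

import Mathlib

open Set

noncomputable section

/-- One-step closed-loop map of the system `x_{t+1} = f(x_t, π_u(x_t), π_d(x_t))`
under a control policy `πu : ℝⁿ → U` and a disturbance policy `πd : ℝⁿ → D`.
The closed-loop trajectory from `x` is `t ↦ (cl f πu πd)^[t] x`. -/
def cl {n mu md : ℕ} {U : Set (Fin mu → ℝ)} {D : Set (Fin md → ℝ)}
    (f : (Fin n → ℝ) → (Fin mu → ℝ) → (Fin md → ℝ) → (Fin n → ℝ))
    (πu : (Fin n → ℝ) → U) (πd : (Fin n → ℝ) → D) :
    (Fin n → ℝ) → (Fin n → ℝ) :=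
  fun y => f y (πu y) (πd y)

/-- The reach-avoid-stay set `RAS`. -/
def RASset {n mu md : ℕ} (U : Set (Fin mu → ℝ)) (D : Set (Fin md → ℝ))
    (f : (Fin n → ℝ) → (Fin mu → ℝ) → (Fin md → ℝ) → (Fin n → ℝ))
    (g l : (Fin n → ℝ) → ℝ) : Set (Fin n → ℝ) :=
  {x | ∃ πu : (Fin n → ℝ) → U, ∀ πd : (Fin n → ℝ) → D,
      (∀ t : ℕ, 0 < l ((cl f πu πd)^[t] x)) ∧
      ∃ τ : ℕ, ∀ t : ℕ, τ ≤ t → 0 < g ((cl f πu πd)^[t] x)}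

/-- The robust viability kernel `AS`. -/
def ASset {n mu md : ℕ} (U : Set (Fin mu → ℝ)) (D : Set (Fin md → ℝ))
    (f : (Fin n → ℝ) → (Fin mu → ℝ) → (Fin md → ℝ) → (Fin n → ℝ))
    (g l : (Fin n → ℝ) → ℝ) : Set (Fin n → ℝ) :=
  {x | ∃ πu : (Fin n → ℝ) → U, ∀ πd : (Fin n → ℝ) → D,
      ∀ t : ℕ, 0 < l ((cl f πu πd)^[t] x) ∧ 0 < g ((cl f πu πd)^[t] x)}

/-- The discounted value function
`H(x) = sup_{π_u} inf_{π_d} inf_t γ^t min(g(x_t), l(x_t))`. -/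
def Hval {n mu md : ℕ} (U : Set (Fin mu → ℝ)) (D : Set (Fin md → ℝ))
    (f : (Fin n → ℝ) → (Fin mu → ℝ) → (Fin md → ℝ) → (Fin n → ℝ))
    (γ : ℝ) (g l : (Fin n → ℝ) → ℝ) (x : Fin n → ℝ) : ℝ :=
  ⨆ πu : (Fin n → ℝ) → U, ⨅ πd : (Fin n → ℝ) → D, ⨅ t : ℕ,
    γ ^ t * min (g ((cl f πu πd)^[t] x)) (l ((cl f πu πd)^[t] x))

/-- `H_g(x) = H(x)` if `H(x) < 0`, and `g(x)` otherwise. -/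
def Hg {n mu md : ℕ} (U : Set (Fin mu → ℝ)) (D : Set (Fin md → ℝ))
    (f : (Fin n → ℝ) → (Fin mu → ℝ) → (Fin md → ℝ) → (Fin n → ℝ))
    (γ : ℝ) (g l : (Fin n → ℝ) → ℝ) (x : Fin n → ℝ) : ℝ :=
  if Hval U D f γ g l x < 0 then Hval U D f γ g l x else g x

/-- The discounted value function
`V(x) = sup_{π_u} inf_{π_d} sup_t min( γ^t H_g(x_t), inf_{s ≤ t} γ^s l(x_s) )`. -/
def Vval {n mu md : ℕ} (U : Set (Fin mu → ℝ)) (D : Set (Fin md → ℝ))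
    (f : (Fin n → ℝ) → (Fin mu → ℝ) → (Fin md → ℝ) → (Fin n → ℝ))
    (γ : ℝ) (g l : (Fin n → ℝ) → ℝ) (x : Fin n → ℝ) : ℝ :=
  ⨆ πu : (Fin n → ℝ) → U, ⨅ πd : (Fin n → ℝ) → D, ⨆ t : ℕ,
    min (γ ^ t * Hg U D f γ g l ((cl f πu πd)^[t] x))
      (⨅ s : Fin (t + 1), γ ^ (s : ℕ) * l ((cl f πu πd)^[(s : ℕ)] x))

/-- if the super-zero level set `S = {y | H_g(y) > 0}` is contained in
`{g > 0} ∩ {l > 0}`, `π_H` renders `S` robustly invariant, and `π_V` safely reaches `S`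
from every state with `V > 0`, then the switching policy
`π_RAS(y) = π_V(y)` if `H_g(y) ≤ 0`, else `π_H(y)`, witnesses `x ∈ RAS` whenever `V(x) > 0`. -/
theorem switching_policy_achieves_RAS {n mu md : ℕ}
    (U : Set (Fin mu → ℝ)) (D : Set (Fin md → ℝ))
    (hU : U.Nonempty) (hD : D.Nonempty)
    (f : (Fin n → ℝ) → (Fin mu → ℝ) → (Fin md → ℝ) → (Fin n → ℝ))
    (γ : ℝ) (hγ : γ ∈ Set.Ioo (0 : ℝ) 1)
    (g l : (Fin n → ℝ) → ℝ)
    (hg : ∃ M, ∀ y, |g y| ≤ M) (hl : ∃ M, ∀ y, |l y| ≤ M)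
    (πH πV : (Fin n → ℝ) → U)
    (hS : {y | 0 < Hg U D f γ g l y} ⊆ {y | 0 < g y} ∩ {y | 0 < l y})
    (hInv : ∀ y, 0 < Hg U D f γ g l y → ∀ d ∈ D, 0 < Hg U D f γ g l (f y (πH y) d))
    (hReach : ∀ x, 0 < Vval U D f γ g l x → ∀ πd : (Fin n → ℝ) → D,
      ∃ τ : ℕ, 0 < Hg U D f γ g l ((cl f πV πd)^[τ] x) ∧
        ∀ t : ℕ, t ≤ τ → 0 < l ((cl f πV πd)^[t] x))
    (x : Fin n → ℝ) (hx : 0 < Vval U D f γ g l x) :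
    ∀ πd : (Fin n → ℝ) → D,
      (∀ t : ℕ,
        0 < l ((cl f (fun y => if Hg U D f γ g l y ≤ 0 then πV y else πH y) πd)^[t] x)) ∧
      ∃ τ : ℕ, ∀ t : ℕ, τ ≤ t →
        0 < g ((cl f (fun y => if Hg U D f γ g l y ≤ 0 then πV y else πH y) πd)^[t] x) := by
  intro πd
  set Hg' := Hg U D f γ g l with hHg'
  set F := cl f (fun y => if Hg' y ≤ 0 then πV y else πH y) πd with hF
  set G := cl f πV πd with hG
  obtain ⟨τ, hτH, hτl⟩ := hReach x hx πd
  have heq : ∀ t : ℕ, (∀ s, s < t → Hg' (F^[s] x) ≤ 0) → F^[t] x = G^[t] x := by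
    intro t
    induction t with
    | zero => intro _; rfl
    | succ t ih =>
      intro h
      have hle : Hg' (F^[t] x) ≤ 0 := h t (Nat.lt_succ_self t)
      have he : F^[t] x = G^[t] x := ih (fun s hs => h s (hs.trans (Nat.lt_succ_self t)))
      rw [Function.iterate_succ_apply', Function.iterate_succ_apply', ← he]
      show F (F^[t] x) = G (F^[t] x)
      simp only [hF, hG, cl] at hle ⊢
      simp only [if_pos hle]
  have hex : ∃ t : ℕ, 0 < Hg' (F^[t] x) := by
    by_contra hc
    push_neg at hc
    have h2 := hc τ
    rw [heq τ (fun s _ => hc s)] at h2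
    exact absurd hτH (not_lt.mpr h2)
  set τ0 := Nat.find hex with hτ0
  have hτ0spec : 0 < Hg' (F^[τ0] x) := Nat.find_spec hex
  have hmin : ∀ s, s < τ0 → Hg' (F^[s] x) ≤ 0 := fun s hs =>
    not_lt.mp (Nat.find_min hex hs)
  have heq' : ∀ t, t ≤ τ0 → F^[t] x = G^[t] x := fun t ht =>
    heq t (fun s hs => hmin s (hs.trans_le ht))
  have hτ0le : τ0 ≤ τ := by
    by_contra hlt
    push_neg at hlt
    have he := heq' τ hlt.le
    exact absurd (Nat.find_le (by rw [he]; exact hτH)) (not_le.mpr hlt)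
  have hpos : ∀ t, τ0 ≤ t → 0 < Hg' (F^[t] x) := by
    intro t ht
    induction t, ht using Nat.le_induction with
    | base => exact hτ0spec
    | succ t ht ih =>
      rw [Function.iterate_succ_apply']
      show 0 < Hg' (F (F^[t] x))
      have hni : ¬ (Hg' (F^[t] x) ≤ 0) := not_le.mpr ih
      simp only [hF, cl] at hni ih ⊢
      simp only [if_neg hni]
      exact hInv _ ih _ (πd _).2
  constructor
  · intro t
    rcases lt_or_ge t τ0 with h | h
    · rw [heq' t h.le]
      exact hτl t (h.le.trans hτ0le)
    · exact (hS (hpos t h)).2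
  · exact ⟨τ0, fun t ht => (hS (hpos t ht)).1⟩
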